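/- arXiv:0910.4645 — 4 statements merged into one kernel-verified Lean document; each statement's English description precedes it below -/
import Mathlib

section
/- Let n be a positive integer and let A be a nonempty subset of [n] = {1,…,n}. For every real number δ with 1 ≤ δ ≤ (n−1)/|A|, the block structure of A on [n] with respect to δ exists and is unique (i.e., there is exactly one partition of [n] into clockwise-consecutive blocks B₁, G₁, …, B_k, G_k satisfying conditions (i)–(iv)). -/
open Fin.NatCast

/-- The clockwise arc of `l` consecutive points on the circular representation of `[n]`
(modelled as `Fin n`), starting at `s`. -/
def cArc (n : ℕ) [NeZero n] (s : Fin n) (l : ℕ) : Finset (Fin n) :=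
  (Finset.range l).image (fun t : ℕ => s + (t : Fin n))

/-- The interval `[A,B] = {C : A ⊆ C ⊆ B}` in the Boolean lattice of subsets of `[n]`. -/
def fInterval {n : ℕ} (A B : Finset (Fin n)) : Finset (Finset (Fin n)) :=
  B.powerset.filter (fun C => A ⊆ C)

/-- A block structure of `A ⊆ [n]` with respect to the density `δ`: a partition of the
circular representation of `[n]` into clockwise-consecutive blocks
`B₁, G₁, B₂, G₂, …, B_k, G_k` satisfying conditions (i)-(iv). Block `Bᵢ` is the arc of
length `blen i` starting at `bstart i`, and the gap `Gᵢ` is the arc of length `glen i`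
immediately following `Bᵢ`. -/
structure BlockStructure (n : ℕ) [NeZero n] (δ : ℝ) (A : Finset (Fin n)) where
  k : ℕ
  kpos : 0 < k
  bstart : Fin k → Fin n
  blen : Fin k → ℕ
  glen : Fin k → ℕ
  blen_pos : ∀ i, 0 < blen i
  /-- the blocks and gaps are clockwise-consecutive: `B_{i+1}` starts right after `Gᵢ` -/
  consec : ∀ i : Fin k,
    bstart ⟨(i.val + 1) % k, Nat.mod_lt _ kpos⟩ = bstart i + ((blen i + glen i : ℕ) : Fin n)
  /-- (i) the first element of each block lies in `A` -/
  start_mem : ∀ i, bstart i ∈ A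
  /-- (ii) the gaps contain no element of `A` -/
  gap_inter : ∀ i, Disjoint (cArc n (bstart i + (blen i : Fin n)) (glen i)) A
  /-- the blocks and gaps cover `[n]` -/
  cover : ∀ x : Fin n,
    (∃ i, x ∈ cArc n (bstart i) (blen i)) ∨
      (∃ i, x ∈ cArc n (bstart i + (blen i : Fin n)) (glen i))
  /-- distinct blocks are disjoint -/
  block_disj : ∀ i j, i ≠ j →
    Disjoint (cArc n (bstart i) (blen i)) (cArc n (bstart j) (blen j))
  /-- distinct gaps are disjoint -/
  gap_disj : ∀ i j, i ≠ j →
    Disjoint (cArc n (bstart i + (blen i : Fin n)) (glen i))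
      (cArc n (bstart j + (blen j : Fin n)) (glen j))
  /-- blocks are disjoint from gaps -/
  block_gap_disj : ∀ i j,
    Disjoint (cArc n (bstart i) (blen i)) (cArc n (bstart j + (blen j : Fin n)) (glen j))
  /-- (iii) lower density bound: `δ·|A ∩ Bᵢ| − 1 < |Bᵢ|` -/
  density_lb : ∀ i,
    δ * ((A ∩ cArc n (bstart i) (blen i)).card : ℝ) - 1 < ((cArc n (bstart i) (blen i)).card : ℝ)
  /-- (iii) upper density bound: `|Bᵢ| ≤ δ·|A ∩ Bᵢ|` -/
  density_ub : ∀ i,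
    ((cArc n (bstart i) (blen i)).card : ℝ) ≤ δ * ((A ∩ cArc n (bstart i) (blen i)).card : ℝ)
  /-- (iv) every proper initial segment `[bᵢ,y] ⊊ Bᵢ` satisfies `|[bᵢ,y]| + 1 ≤ δ·|[bᵢ,y] ∩ A|` -/
  initial_seg : ∀ i, ∀ t : ℕ, t + 1 < blen i →
    ((cArc n (bstart i) (t + 1)).card : ℝ) + 1 ≤ δ * (((cArc n (bstart i) (t + 1)) ∩ A).card : ℝ)

namespace BlockStructure

variable {n : ℕ} [NeZero n] {δ : ℝ} {A : Finset (Fin n)}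

/-- The block `Bᵢ`. -/
def block (P : BlockStructure n δ A) (i : Fin P.k) : Finset (Fin n) :=
  cArc n (P.bstart i) (P.blen i)

/-- The gap `Gᵢ`. -/
def gap (P : BlockStructure n δ A) (i : Fin P.k) : Finset (Fin n) :=
  cArc n (P.bstart i + (P.blen i : Fin n)) (P.glen i)

/-- `𝒢_δ(A) = G₁ ∪ ⋯ ∪ G_k`, the union of the gaps. -/
def gapsUnion (P : BlockStructure n δ A) : Finset (Fin n) :=
  Finset.univ.biUnion P.gap

/-- `f_δ(A) = A ∪ 𝒢_δ(A)`. -/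
def fset (P : BlockStructure n δ A) : Finset (Fin n) :=
  A ∪ P.gapsUnion

end BlockStructure

namespace BSAux

set_option linter.unusedSectionVars false

variable {n : ℕ} [NeZero n]

lemma mem_cArc {s x : Fin n} {l : ℕ} : x ∈ cArc n s l ↔ ∃ t, t < l ∧ x = s + (t : Fin n) := by
  simp [cArc, eq_comm]

/-- position of `x` relative to base `s` -/
def pos (s x : Fin n) : ℕ := ((x - s : Fin n) : ℕ)

lemma pos_lt (s x : Fin n) : pos s x < n := (x - s).isLt

lemma add_pos_eq (s x : Fin n) : s + ((pos s x : ℕ) : Fin n) = x := by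
  rw [pos, Fin.cast_val_eq_self]; abel

lemma pos_add (s : Fin n) {u : ℕ} (hu : u < n) : pos s (s + (u : Fin n)) = u := by
  rw [pos, add_sub_cancel_left, Fin.val_cast_of_lt hu]

lemma mem_cArc_base {s x : Fin n} {c l : ℕ} (h : c + l ≤ n) :
    x ∈ cArc n (s + (c : Fin n)) l ↔ c ≤ pos s x ∧ pos s x < c + l := by
  rw [mem_cArc]
  constructor
  · rintro ⟨t, ht, rfl⟩
    rw [add_assoc, ← Nat.cast_add, pos_add s (by omega)]
    omega
  · rintro ⟨h1, h2⟩
    refine ⟨pos s x - c, by omega, ?_⟩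
    rw [add_assoc, ← Nat.cast_add]
    have hc : c + (pos s x - c) = pos s x := by omega
    rw [hc, add_pos_eq]

lemma mem_cArc_pos {s x : Fin n} {l : ℕ} (h : l ≤ n) :
    x ∈ cArc n s l ↔ pos s x < l := by
  have := mem_cArc_base (s := s) (x := x) (c := 0) (l := l) (by omega)
  simpa using this

lemma cArc_card {s : Fin n} {l : ℕ} (h : l ≤ n) : (cArc n s l).card = l := by
  rw [cArc, Finset.card_image_of_injOn, Finset.card_range]
  intro a ha b hb hab
  simp only [Finset.coe_range, Set.mem_Iio] at ha hb
  have hab' : s + (a : Fin n) = s + (b : Fin n) := hab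
  have : pos s (s + (a : Fin n)) = pos s (s + (b : Fin n)) := by rw [hab']
  rwa [pos_add s (by omega), pos_add s (by omega)] at this

lemma cArc_mono {s : Fin n} {l l' : ℕ} (h : l ≤ l') : cArc n s l ⊆ cArc n s l' :=
  Finset.image_subset_image (Finset.range_subset_range.2 h)

lemma cArc_univ (s : Fin n) {l : ℕ} (h : n ≤ l) : cArc n s l = Finset.univ := by
  have h1 : (cArc n s n).card = n := cArc_card le_rfl
  have h3 : n ≤ (cArc n s l).card :=
    le_trans (le_of_eq h1.symm) (Finset.card_le_card (cArc_mono h))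
  apply Finset.eq_univ_of_card
  simp only [Fintype.card_fin]
  exact le_antisymm ((Finset.card_le_univ _).trans_eq (by simp)) h3

lemma cArc_append (s : Fin n) (u v : ℕ) :
    cArc n s (u + v) = cArc n s u ∪ cArc n (s + (u : Fin n)) v := by
  ext x
  simp only [Finset.mem_union, mem_cArc]
  constructor
  · rintro ⟨t, ht, rfl⟩
    rcases lt_or_ge t u with h | h
    · exact Or.inl ⟨t, h, rfl⟩
    · refine Or.inr ⟨t - u, by omega, ?_⟩
      rw [add_assoc, ← Nat.cast_add]
      congr 2
      omega
  · rintro (⟨t, ht, rfl⟩ | ⟨t, ht, rfl⟩)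
    · exact ⟨t, by omega, rfl⟩
    · exact ⟨u + t, by omega, by rw [add_assoc, ← Nat.cast_add]⟩

lemma self_mem_cArc {s : Fin n} {l : ℕ} (h : 0 < l) : s ∈ cArc n s l :=
  mem_cArc.2 ⟨0, h, by simp⟩

end BSAux

namespace BSAux

noncomputable section
open Classical

set_option linter.unusedSectionVars false

variable {n : ℕ} [NeZero n]

def cnt (A : Finset (Fin n)) (s : Fin n) (l : ℕ) : ℕ := (A ∩ cArc n s l).card

lemma cnt_mono (A : Finset (Fin n)) (s : Fin n) {l l' : ℕ} (h : l ≤ l') :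
    cnt A s l ≤ cnt A s l' :=
  Finset.card_le_card (Finset.inter_subset_inter Finset.Subset.rfl (cArc_mono h))

lemma cnt_le (A : Finset (Fin n)) (s : Fin n) (l : ℕ) : cnt A s l ≤ A.card :=
  Finset.card_le_card Finset.inter_subset_left

lemma cnt_full (A : Finset (Fin n)) (s : Fin n) {l : ℕ} (h : n ≤ l) : cnt A s l = A.card := by
  rw [cnt, cArc_univ s h, Finset.inter_univ]

lemma cnt_add (A : Finset (Fin n)) (s : Fin n) {u v : ℕ} (h : u + v ≤ n) :
    cnt A s (u + v) = cnt A s u + cnt A (s + (u : Fin n)) v := by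
  rw [cnt, cnt, cnt, cArc_append, Finset.inter_union_distrib_left]
  apply Finset.card_union_of_disjoint
  apply Finset.disjoint_left.2
  intro x hx hx'
  have h1 := (mem_cArc_pos (x := x) (s := s) (by omega)).1 (Finset.mem_inter.1 hx).2
  have h2 := (mem_cArc_base (x := x) (s := s) (c := u) (l := v) h).1 (Finset.mem_inter.1 hx').2
  omega

lemma cnt_one {A : Finset (Fin n)} {s : Fin n} (hs : s ∈ A) : 1 ≤ cnt A s 1 := by
  rw [cnt]
  refine Finset.card_pos.2 ⟨s, Finset.mem_inter.2 ⟨hs, self_mem_cArc one_pos⟩⟩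

/-- the canonical block length starting at a point -/
def LB (δ : ℝ) (A : Finset (Fin n)) (a : Fin n) : ℕ :=
  sInf {t | 0 < t ∧ δ * cnt A a t < t + 1}

variable {δ : ℝ} {A : Finset (Fin n)}

section Lprops

variable (hδ1 : 1 ≤ δ) (hδA : δ * A.card ≤ (n : ℝ) - 1)
include hδ1 hδA

lemma LB_setne (a : Fin n) : {t | 0 < t ∧ δ * cnt A a t < t + 1}.Nonempty := by
  refine ⟨n, Nat.pos_of_ne_zero (NeZero.ne n), ?_⟩
  rw [cnt_full A a le_rfl]
  calc δ * A.card ≤ (n : ℝ) - 1 := hδA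
    _ < (n : ℝ) + 1 := by linarith

lemma LB_pos (a : Fin n) : 0 < LB δ A a := (Nat.sInf_mem (LB_setne hδ1 hδA a)).1

lemma LB_lt (a : Fin n) : δ * cnt A a (LB δ A a) < LB δ A a + 1 :=
  (Nat.sInf_mem (LB_setne hδ1 hδA a)).2

lemma LB_le_n (a : Fin n) : LB δ A a ≤ n := by
  apply Nat.sInf_le
  show 0 < n ∧ δ * cnt A a n < (n : ℝ) + 1
  refine ⟨Nat.pos_of_ne_zero (NeZero.ne n), ?_⟩
  rw [cnt_full A a le_rfl]
  linarith

lemma LB_ge (a : Fin n) {t : ℕ} (h1 : 1 ≤ t) (h2 : t < LB δ A a) :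
    (t : ℝ) + 1 ≤ δ * cnt A a t := by
  by_contra h
  push_neg at h
  have : LB δ A a ≤ t :=
    Nat.sInf_le (show 0 < t ∧ δ * cnt A a t < (t : ℝ) + 1 from ⟨by omega, h⟩)
  omega

lemma LB_lb {a : Fin n} (ha : a ∈ A) : (LB δ A a : ℝ) ≤ δ * cnt A a (LB δ A a) := by
  have hL := LB_pos hδ1 hδA (A := A) a
  rcases Nat.lt_or_ge 1 (LB δ A a) with h | h
  · have h1 := LB_ge hδ1 hδA a (t := LB δ A a - 1) (by omega) (by omega)
    have h2 : cnt A a (LB δ A a - 1) ≤ cnt A a (LB δ A a) := cnt_mono A a (by omega)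
    have h3 : δ * cnt A a (LB δ A a - 1) ≤ δ * cnt A a (LB δ A a) :=
      mul_le_mul_of_nonneg_left (by exact_mod_cast h2) (by linarith)
    have h4 : ((LB δ A a - 1 : ℕ) : ℝ) = (LB δ A a : ℝ) - 1 := by
      push_cast [Nat.cast_sub hL]; ring
    linarith
  · have hL1 : LB δ A a = 1 := by omega
    rw [hL1]
    have := cnt_one (s := a) ha
    have h5 : (1 : ℝ) ≤ cnt A a 1 := by exact_mod_cast this
    push_cast
    nlinarith

lemma LB_eq {a : Fin n} {b : ℕ} (hb : 0 < b) (h1 : δ * cnt A a b < b + 1)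
    (h2 : ∀ t : ℕ, 1 ≤ t → t < b → (t : ℝ) + 1 ≤ δ * cnt A a t) : LB δ A a = b := by
  apply le_antisymm (Nat.sInf_le (show 0 < b ∧ δ * cnt A a b < (b : ℝ) + 1 from ⟨hb, h1⟩))
  by_contra h
  push_neg at h
  have hL := LB_pos hδ1 hδA (A := A) a
  have := h2 (LB δ A a) (by omega) h
  have := LB_lt hδ1 hδA (A := A) a
  linarith

/-- nesting lemma -/
lemma LB_nest {a : Fin n} {s : ℕ} (h1 : 1 ≤ s) (h2 : s < LB δ A a) :
    s + LB δ A (a + (s : Fin n)) ≤ LB δ A a := by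
  by_contra h
  push_neg at h
  set a' := a + (s : Fin n)
  set t := LB δ A a - s with ht
  have htpos : 1 ≤ t := by omega
  have htlt : t < LB δ A a' := by omega
  have hs1 : (s : ℝ) + 1 ≤ δ * cnt A a s := LB_ge hδ1 hδA a h1 h2
  have hs2 : (t : ℝ) + 1 ≤ δ * cnt A a' t := LB_ge hδ1 hδA a' htpos htlt
  have hadd : cnt A a (s + t) = cnt A a s + cnt A a' t :=
    cnt_add A a (by have := LB_le_n hδ1 hδA (A := A) a; omega)
  have hst : s + t = LB δ A a := by omega
  rw [hst] at hadd
  have := LB_lt hδ1 hδA (A := A) a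
  rw [hadd] at this
  push_cast at this
  rw [mul_add] at this
  have hc : ((LB δ A a : ℝ)) = (s : ℝ) + t := by exact_mod_cast hst.symm
  linarith

end Lprops

end

end BSAux

namespace BSAux

noncomputable section
open Classical

set_option linter.unusedSectionVars false

variable {n : ℕ} [NeZero n] {δ : ℝ} {A : Finset (Fin n)}

/-- `m` is interior to the canonical block of `a` -/
def Intr (δ : ℝ) (A : Finset (Fin n)) (a m : Fin n) : Prop :=
  ∃ s : ℕ, 1 ≤ s ∧ s < LB δ A a ∧ m = a + (s : Fin n)

/-- the set of maximal elements of `A` -/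
def MM (δ : ℝ) (A : Finset (Fin n)) : Finset (Fin n) :=
  A.filter (fun m => ∀ a ∈ A, ¬ Intr δ A a m)

lemma MM_sub : MM δ A ⊆ A := Finset.filter_subset _ _

lemma mem_MM {m : Fin n} : m ∈ MM δ A ↔ m ∈ A ∧ ∀ a ∈ A, ¬ Intr δ A a m := by
  simp [MM]

variable (hδ1 : 1 ≤ δ) (hδA : δ * A.card ≤ (n : ℝ) - 1)
include hδ1 hδA

lemma MM_ne (hA : A.Nonempty) : (MM δ A).Nonempty := by
  obtain ⟨a, ha, hmax⟩ := Finset.exists_max_image A (LB δ A) hA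
  refine ⟨a, mem_MM.2 ⟨ha, ?_⟩⟩
  rintro a' ha' ⟨s, hs1, hs2, rfl⟩
  have h1 := LB_nest hδ1 hδA hs1 hs2
  have h2 := hmax _ ha'
  omega

lemma A_cover_aux : ∀ N : ℕ, ∀ a ∈ A, n - LB δ A a ≤ N →
    ∃ m ∈ MM δ A, ∃ s : ℕ, s < LB δ A m ∧ a = m + (s : Fin n) := by
  intro N
  induction N with
  | zero =>
    intro a ha hN
    have hle := LB_le_n hδ1 hδA a
    by_cases hm : a ∈ MM δ A
    · exact ⟨a, hm, 0, LB_pos hδ1 hδA a, by simp⟩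
    · rw [mem_MM] at hm
      push_neg at hm
      obtain ⟨a', ha', s', hs1, hs2, rfl⟩ := hm ha
      have hnest := LB_nest hδ1 hδA hs1 hs2
      have hle' := LB_le_n hδ1 hδA a'
      omega
  | succ N ih =>
    intro a ha hN
    by_cases hm : a ∈ MM δ A
    · exact ⟨a, hm, 0, LB_pos hδ1 hδA a, by simp⟩
    · rw [mem_MM] at hm
      push_neg at hm
      obtain ⟨a', ha', s', hs1, hs2, rfl⟩ := hm ha
      have hnest := LB_nest hδ1 hδA hs1 hs2
      have hLlt : LB δ A (a' + (s' : Fin n)) < LB δ A a' := by omega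
      have hle : LB δ A a' ≤ n := LB_le_n hδ1 hδA a'
      obtain ⟨m, hm, s'', hs'', heq⟩ := ih a' ha' (by omega)
      refine ⟨m, hm, s'' + s', ?_, ?_⟩
      · rcases Nat.eq_zero_or_pos s'' with h0 | h0
        · subst h0
          have : a' = m := by simpa using heq
          subst this
          omega
        · have : s'' + LB δ A (m + (s'' : Fin n)) ≤ LB δ A m := LB_nest hδ1 hδA h0 hs''
          rw [← heq] at this
          omega
      · rw [heq, add_assoc, Nat.cast_add]

lemma A_cover {a : Fin n} (ha : a ∈ A) :
    ∃ m ∈ MM δ A, ∃ s : ℕ, s < LB δ A m ∧ a = m + (s : Fin n) :=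
  A_cover_aux hδ1 hδA n a ha (by omega)

end

end BSAux

namespace BSAux

noncomputable section
open Classical

set_option linter.unusedSectionVars false

variable {n : ℕ} [NeZero n] {δ : ℝ} {A : Finset (Fin n)}

/-- distance from a maximal element to the next maximal element -/
def dN (δ : ℝ) (A : Finset (Fin n)) (m : Fin n) : ℕ :=
  sInf {u : ℕ | 0 < u ∧ m + (u : Fin n) ∈ MM δ A}

lemma dN_setne {m : Fin n} (hm : m ∈ MM δ A) :
    {u : ℕ | 0 < u ∧ m + (u : Fin n) ∈ MM δ A}.Nonempty := by
  refine ⟨n, Nat.pos_of_ne_zero (NeZero.ne n), ?_⟩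
  rw [Fin.natCast_self, add_zero]
  exact hm

lemma dN_spec {m : Fin n} (hm : m ∈ MM δ A) :
    0 < dN δ A m ∧ m + ((dN δ A m : ℕ) : Fin n) ∈ MM δ A := by
  have h := Nat.sInf_mem (dN_setne hm)
  exact h

lemma dN_pos {m : Fin n} (hm : m ∈ MM δ A) : 0 < dN δ A m := (dN_spec hm).1

lemma dN_next {m : Fin n} (hm : m ∈ MM δ A) : m + ((dN δ A m : ℕ) : Fin n) ∈ MM δ A :=
  (dN_spec hm).2

lemma dN_le {m : Fin n} {u : ℕ} (h : 0 < u) (h2 : m + (u : Fin n) ∈ MM δ A) :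
    dN δ A m ≤ u :=
  Nat.sInf_le ⟨h, h2⟩

lemma dN_le_n {m : Fin n} (hm : m ∈ MM δ A) : dN δ A m ≤ n :=
  dN_le (u := n) (Nat.pos_of_ne_zero (NeZero.ne n))
    (by rw [Fin.natCast_self, add_zero]; exact hm)

lemma dN_min {m : Fin n} {u : ℕ} (h : 0 < u) (hu : u < dN δ A m) :
    m + (u : Fin n) ∉ MM δ A :=
  fun hmem => absurd (dN_le h hmem) (by omega)

variable (hδ1 : 1 ≤ δ) (hδA : δ * A.card ≤ (n : ℝ) - 1)
include hδ1 hδA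

lemma LB_le_dN {m : Fin n} (hm : m ∈ MM δ A) : LB δ A m ≤ dN δ A m := by
  by_contra h
  push_neg at h
  have h1 := dN_pos hm
  have h2 := dN_next hm
  have := (mem_MM.1 h2).2 m (MM_sub hm)
  exact this ⟨dN δ A m, h1, h, rfl⟩

end

end BSAux

namespace BSAux

noncomputable section
open Classical

set_option linter.unusedSectionVars false

variable {n : ℕ} [NeZero n] {δ : ℝ} {A : Finset (Fin n)}

lemma fin_add_ne (x : Fin n) {u : ℕ} (h1 : 1 ≤ u) (h2 : u < n) : x + (u : Fin n) ≠ x := by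
  intro h
  have h0 : (u : Fin n) = 0 := add_eq_left.1 h
  have := (Fin.natCast_eq_zero).1 h0
  obtain ⟨c, rfl⟩ := this
  rcases Nat.eq_zero_or_pos c with rfl | hc
  · omega
  · nlinarith [Nat.le_mul_of_pos_right n hc]

section Unique

variable (hA : A.Nonempty) (hδ1 : 1 ≤ δ) (hδA : δ * A.card ≤ (n : ℝ) - 1)
variable (P : BlockStructure n δ A)
include hδ1 hδA

lemma blen_lt (i : Fin P.k) : P.blen i < n := by
  have hub := P.density_ub i
  have hcle : ((A ∩ cArc n (P.bstart i) (P.blen i)).card : ℝ) ≤ (A.card : ℝ) := by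
    exact_mod_cast Finset.card_le_card Finset.inter_subset_left
  have hδ0 : (0 : ℝ) ≤ δ := by linarith
  have h1 : ((cArc n (P.bstart i) (P.blen i)).card : ℝ) ≤ (n : ℝ) - 1 :=
    hub.trans ((mul_le_mul_of_nonneg_left hcle hδ0).trans hδA)
  have h2 : (cArc n (P.bstart i) (P.blen i)).card < n := by
    by_contra hc
    push_neg at hc
    have : (n : ℝ) ≤ ((cArc n (P.bstart i) (P.blen i)).card : ℝ) := by exact_mod_cast hc
    linarith
  by_contra hb
  push_neg at hb
  rw [cArc_univ _ hb, Finset.card_univ, Fintype.card_fin] at h2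
  omega

lemma block_card (i : Fin P.k) : (cArc n (P.bstart i) (P.blen i)).card = P.blen i :=
  cArc_card (le_of_lt (blen_lt hδ1 hδA P i))

include hA in
lemma glen_lt (i : Fin P.k) : P.glen i < n := by
  by_contra h
  push_neg at h
  have huniv := cArc_univ (P.bstart i + ((P.blen i : ℕ) : Fin n)) h
  have hd := P.gap_inter i
  rw [huniv] at hd
  obtain ⟨a, ha⟩ := hA
  exact (Finset.disjoint_left.1 hd (Finset.mem_univ a)) ha

include hA in
lemma blen_add_glen_le (i : Fin P.k) : P.blen i + P.glen i ≤ n := by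
  have hd := P.block_gap_disj i i
  have hcard := Finset.card_union_of_disjoint hd
  have hle := Finset.card_le_univ
    (cArc n (P.bstart i) (P.blen i) ∪ cArc n (P.bstart i + ((P.blen i : ℕ) : Fin n)) (P.glen i))
  rw [hcard, block_card hδ1 hδA P i,
    cArc_card (le_of_lt (glen_lt hA hδ1 hδA P i))] at hle
  simpa using hle

lemma blen_eq (i : Fin P.k) : P.blen i = LB δ A (P.bstart i) := by
  symm
  apply LB_eq hδ1 hδA (P.blen_pos i)
  · have hlb := P.density_lb i
    rw [block_card hδ1 hδA P i] at hlb
    rw [cnt]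
    linarith
  · intro t h1t htb
    obtain ⟨t', rfl⟩ : ∃ t', t = t' + 1 := ⟨t - 1, by omega⟩
    have hseg := P.initial_seg i t' htb
    have hblt := blen_lt hδ1 hδA P i
    rw [cArc_card (by omega)] at hseg
    rw [cnt, Finset.inter_comm]
    push_cast at hseg ⊢
    linarith

lemma mem_block_of_mem_A {a : Fin n} (ha : a ∈ A) :
    ∃ j, ∃ s : ℕ, s < P.blen j ∧ a = P.bstart j + (s : Fin n) := by
  rcases P.cover a with ⟨j, hj⟩ | ⟨j, hj⟩
  · obtain ⟨t, ht, rfl⟩ := mem_cArc.1 hj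
    exact ⟨j, t, ht, rfl⟩
  · exact absurd ha (Finset.disjoint_left.1 (P.gap_inter j) hj)

lemma start_unique {i j : Fin P.k} {u : ℕ} (hu : u < P.blen i)
    (heq : P.bstart j = P.bstart i + (u : Fin n)) : j = i ∧ u = 0 := by
  have hji : P.bstart j ∈ cArc n (P.bstart i) (P.blen i) := mem_cArc.2 ⟨u, hu, heq⟩
  have hjj : P.bstart j ∈ cArc n (P.bstart j) (P.blen j) := self_mem_cArc (P.blen_pos j)
  by_cases hij : j = i
  · subst hij
    refine ⟨rfl, ?_⟩
    by_contra hu0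
    exact fin_add_ne (P.bstart j) (by omega) (lt_trans hu (blen_lt hδ1 hδA P j)) heq.symm
  · exact absurd hjj
      (Finset.disjoint_left.1 (P.block_disj i j (fun h => hij h.symm)) hji)

lemma bstart_mem_MM (i : Fin P.k) : P.bstart i ∈ MM δ A := by
  rw [mem_MM]
  refine ⟨P.start_mem i, ?_⟩
  rintro a' ha' ⟨s, hs1, hs2, heq⟩
  obtain ⟨j, s', hs', heq'⟩ := mem_block_of_mem_A hδ1 hδA P ha'
  rw [blen_eq hδ1 hδA P j] at hs'
  have heq2 : P.bstart i = P.bstart j + ((s' + s : ℕ) : Fin n) := by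
    rw [heq, heq', add_assoc, Nat.cast_add]
  have key : s' + s < LB δ A (P.bstart j) := by
    rcases Nat.eq_zero_or_pos s' with h0 | h0
    · subst h0
      have : a' = P.bstart j := by simpa using heq'
      rw [this] at hs2
      omega
    · have hnest : s' + LB δ A (P.bstart j + (s' : Fin n)) ≤ LB δ A (P.bstart j) :=
        LB_nest hδ1 hδA h0 hs'
      rw [← heq'] at hnest
      omega
  have := start_unique hδ1 hδA P (u := s' + s)
    (by rw [blen_eq hδ1 hδA P j]; exact key) heq2
  omega

lemma MM_surj {m : Fin n} (hm : m ∈ MM δ A) : ∃ i, P.bstart i = m := by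
  obtain ⟨j, s, hs, heq⟩ := mem_block_of_mem_A hδ1 hδA P (MM_sub hm)
  rcases Nat.eq_zero_or_pos s with h0 | h0
  · subst h0
    exact ⟨j, by simpa using heq.symm⟩
  · exfalso
    refine (mem_MM.1 hm).2 (P.bstart j) (P.start_mem j) ?_
    exact ⟨s, h0, by rw [← blen_eq hδ1 hδA P j]; exact hs, heq⟩

include hA in
lemma c_eq_dN (i : Fin P.k) : P.blen i + P.glen i = dN δ A (P.bstart i) := by
  have hcn : P.blen i + P.glen i ≤ n := blen_add_glen_le hA hδ1 hδA P i
  have hcpos : 0 < P.blen i + P.glen i := by have := P.blen_pos i; omega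
  have hnext : P.bstart i + ((P.blen i + P.glen i : ℕ) : Fin n) ∈ MM δ A := by
    rw [← P.consec i]
    exact bstart_mem_MM hδ1 hδA P _
  refine le_antisymm ?_ (dN_le hcpos hnext)
  by_contra h
  push_neg at h
  have hmem : P.bstart i ∈ MM δ A := bstart_mem_MM hδ1 hδA P i
  have hdpos := dN_pos hmem
  have hdnext := dN_next hmem
  obtain ⟨j, hj⟩ := MM_surj hδ1 hδA P hdnext
  have hjin : P.bstart j ∈ cArc n (P.bstart i) (P.blen i + P.glen i) :=
    mem_cArc.2 ⟨dN δ A (P.bstart i), h, hj⟩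
  rw [cArc_append] at hjin
  rcases Finset.mem_union.1 hjin with hb | hg
  · obtain ⟨v, hv, hveq⟩ := mem_cArc.1 hb
    obtain ⟨hji, hv0⟩ := start_unique hδ1 hδA P hv hveq
    subst hv0
    have hfix : P.bstart i + ((dN δ A (P.bstart i) : ℕ) : Fin n) = P.bstart i := by
      rw [← hj, hveq]; simp
    exact fin_add_ne _ (by omega) (by omega) hfix
  · exact (Finset.disjoint_left.1 (P.gap_inter i) hg) (P.start_mem j)

include hA in
lemma glen_eq (i : Fin P.k) : P.glen i = dN δ A (P.bstart i) - LB δ A (P.bstart i) := by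
  have h1 := c_eq_dN hA hδ1 hδA P i
  have h2 := blen_eq hδ1 hδA P i
  omega

lemma range_block_eq :
    Set.range P.block = (fun m => cArc n m (LB δ A m)) '' ↑(MM δ A) := by
  ext B
  simp only [Set.mem_range, Set.mem_image, Finset.mem_coe]
  constructor
  · rintro ⟨i, rfl⟩
    exact ⟨P.bstart i, bstart_mem_MM hδ1 hδA P i,
      by rw [BlockStructure.block, blen_eq hδ1 hδA P i]⟩
  · rintro ⟨m, hm, rfl⟩
    obtain ⟨i, rfl⟩ := MM_surj hδ1 hδA P hm
    exact ⟨i, by rw [BlockStructure.block, blen_eq hδ1 hδA P i]⟩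

include hA in
lemma range_gap_eq :
    Set.range P.gap =
      (fun m => cArc n (m + ((LB δ A m : ℕ) : Fin n)) (dN δ A m - LB δ A m)) '' ↑(MM δ A) := by
  ext B
  simp only [Set.mem_range, Set.mem_image, Finset.mem_coe]
  constructor
  · rintro ⟨i, rfl⟩
    exact ⟨P.bstart i, bstart_mem_MM hδ1 hδA P i,
      by rw [BlockStructure.gap, blen_eq hδ1 hδA P i, glen_eq hA hδ1 hδA P i]⟩
  · rintro ⟨m, hm, rfl⟩
    obtain ⟨i, rfl⟩ := MM_surj hδ1 hδA P hm
    exact ⟨i, by rw [BlockStructure.gap, blen_eq hδ1 hδA P i, glen_eq hA hδ1 hδA P i]⟩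

end Unique

end

end BSAux

namespace BSAux

noncomputable section
open Classical

set_option linter.unusedSectionVars false
set_option maxHeartbeats 1000000

variable {n : ℕ} [NeZero n] {δ : ℝ} {A : Finset (Fin n)}

lemma exists_bs (hA : A.Nonempty) (hδ1 : 1 ≤ δ) (hδA : δ * A.card ≤ (n : ℝ) - 1) :
    Nonempty (BlockStructure n δ A) := by
  obtain ⟨a₀, ha₀⟩ := MM_ne hδ1 hδA hA
  set M' : Finset (Fin n) := (MM δ A).image (fun m => m - a₀) with hM'
  set k : ℕ := (MM δ A).card with hkdef
  have kpos : 0 < k := Finset.card_pos.2 ⟨a₀, ha₀⟩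
  have hkM' : M'.card = k := by
    rw [hM', hkdef]
    apply Finset.card_image_of_injective
    intro x y hxy
    simpa using sub_left_injective hxy
  set e := M'.orderIsoOfFin hkM' with he
  set E : Fin k → ℕ := fun i => ((e i : Fin n) : ℕ) with hE
  set aa : Fin k → Fin n := fun i => a₀ + ((E i : ℕ) : Fin n) with haa
  -- basic facts about E
  have hmono : ∀ i j : Fin k, i.val < j.val → E i < E j := by
    intro i j h
    have h1 : e i < e j := e.strictMono (by exact h)
    have h2 : (e i : Fin n) < (e j : Fin n) := Subtype.coe_lt_coe.2 h1
    exact h2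
  have hEn : ∀ i, E i < n := fun i => (e i : Fin n).isLt
  have h0mem : (0 : Fin n) ∈ M' := Finset.mem_image.2 ⟨a₀, ha₀, sub_self a₀⟩
  have hE0 : E ⟨0, kpos⟩ = 0 := by
    have hle0 : (⟨0, kpos⟩ : Fin k) ≤ e.symm ⟨0, h0mem⟩ := by
      rw [Fin.le_def]; exact Nat.zero_le _
    have hle : e ⟨0, kpos⟩ ≤ ⟨0, h0mem⟩ := by
      have := e.monotone hle0
      rwa [e.apply_symm_apply] at this
    have hle2 : (e ⟨0, kpos⟩ : Fin n) ≤ (0 : Fin n) := Subtype.coe_le_coe.2 hle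
    have : ((e ⟨0, kpos⟩ : Fin n) : ℕ) ≤ 0 := by
      rw [Fin.le_def] at hle2
      simpa using hle2
    simpa [hE] using this
  -- aa hits exactly MM
  have haM : ∀ i, aa i ∈ MM δ A := by
    intro i
    obtain ⟨m, hm, hme⟩ := Finset.mem_image.1 (e i).2
    have hval : aa i = m := by
      show a₀ + ((E i : ℕ) : Fin n) = m
      rw [hE]
      simp only []
      rw [Fin.cast_val_eq_self, ← hme]
      abel
    rw [hval]; exact hm
  have hsurjM : ∀ m ∈ MM δ A, ∃ i, aa i = m := by
    intro m hm
    have hmem : m - a₀ ∈ M' := Finset.mem_image.2 ⟨m, hm, rfl⟩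
    refine ⟨e.symm ⟨m - a₀, hmem⟩, ?_⟩
    show a₀ + ((E _ : ℕ) : Fin n) = m
    rw [hE]
    simp only []
    rw [Fin.cast_val_eq_self, e.apply_symm_apply]
    show a₀ + (m - a₀) = m
    abel
  -- the cell lengths
  set d : Fin k → ℕ := fun i => (if h : i.val + 1 < k then E ⟨i.val + 1, h⟩ else n) - E i
    with hd
  have hd1 : ∀ (i : Fin k) (h : i.val + 1 < k), E i + d i = E ⟨i.val + 1, h⟩ := by
    intro i h
    have hm : E i < E ⟨i.val + 1, h⟩ := hmono _ _ (by simp)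
    rw [hd]; simp only [dif_pos h]; omega
  have hd2 : ∀ i : Fin k, i.val + 1 = k → E i + d i = n := by
    intro i h
    have := hEn i
    rw [hd]; simp only [dif_neg (by omega : ¬ i.val + 1 < k)]; omega
  have hdpos : ∀ i, 0 < d i := by
    intro i
    by_cases h : i.val + 1 < k
    · have := hd1 i h; have := hmono i ⟨i.val + 1, h⟩ (by simp); omega
    · have := hd2 i (by have := i.isLt; omega); have := hEn i; omega
  have hcell : ∀ i, E i + d i ≤ n := by
    intro i
    by_cases h : i.val + 1 < k
    · rw [hd1 i h]; exact le_of_lt (hEn _)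
    · rw [hd2 i (by have := i.isLt; omega)]
  have hord : ∀ i j : Fin k, i.val < j.val → E i + d i ≤ E j := by
    intro i j hij
    have h : i.val + 1 < k := by have := j.isLt; omega
    rw [hd1 i h]
    rcases eq_or_lt_of_le (show i.val + 1 ≤ j.val by omega) with heq | hlt
    · have : (⟨i.val + 1, h⟩ : Fin k) = j := Fin.ext heq
      rw [this]
    · exact le_of_lt (hmono _ _ hlt)
  -- consecutive structure
  have hEd : ∀ i : Fin k, aa i + ((d i : ℕ) : Fin n) = aa ⟨(i.val + 1) % k, Nat.mod_lt _ kpos⟩ := by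
    intro i
    show a₀ + ((E i : ℕ) : Fin n) + ((d i : ℕ) : Fin n) = a₀ + _
    rw [add_assoc, ← Nat.cast_add]
    by_cases h : i.val + 1 < k
    · have hmod : (⟨(i.val + 1) % k, Nat.mod_lt _ kpos⟩ : Fin k) = ⟨i.val + 1, h⟩ :=
        Fin.ext (Nat.mod_eq_of_lt h)
      rw [hmod, hd1 i h]
    · have hik : i.val + 1 = k := by have := i.isLt; omega
      have hmod : (⟨(i.val + 1) % k, Nat.mod_lt _ kpos⟩ : Fin k) = ⟨0, kpos⟩ := by
        rw [Fin.mk_eq_mk, hik]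
        exact Nat.mod_self k
      rw [hmod, hd2 i hik, hE0]
      simp [Fin.natCast_self]
  -- block lengths fit in cells
  have hLd : ∀ i, LB δ A (aa i) ≤ d i := by
    intro i
    by_contra hcon
    push_neg at hcon
    have hnext : aa ⟨(i.val + 1) % k, Nat.mod_lt _ kpos⟩ ∈ MM δ A := haM _
    rw [← hEd i] at hnext
    exact (mem_MM.1 hnext).2 (aa i) (MM_sub (haM i)) ⟨d i, hdpos i, hcon, rfl⟩
  have hLn : ∀ i, E i + LB δ A (aa i) ≤ n := fun i => le_trans (by have := hLd i; omega) (hcell i)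
  -- membership characterizations
  have hblockmem : ∀ (i : Fin k) (x : Fin n),
      x ∈ cArc n (aa i) (LB δ A (aa i)) ↔
        E i ≤ pos a₀ x ∧ pos a₀ x < E i + LB δ A (aa i) := by
    intro i x
    exact mem_cArc_base (hLn i)
  have hgapstart : ∀ i : Fin k,
      aa i + ((LB δ A (aa i) : ℕ) : Fin n) = a₀ + (((E i + LB δ A (aa i) : ℕ)) : Fin n) := by
    intro i
    show a₀ + ((E i : ℕ) : Fin n) + _ = _
    rw [add_assoc, ← Nat.cast_add]
  have hgapmem : ∀ (i : Fin k) (x : Fin n),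
      x ∈ cArc n (aa i + ((LB δ A (aa i) : ℕ) : Fin n)) (d i - LB δ A (aa i)) ↔
        E i + LB δ A (aa i) ≤ pos a₀ x ∧ pos a₀ x < E i + d i := by
    intro i x
    rw [hgapstart i]
    have h1 : E i + LB δ A (aa i) + (d i - LB δ A (aa i)) = E i + d i := by
      have := hLd i; omega
    rw [show E i + d i = E i + LB δ A (aa i) + (d i - LB δ A (aa i)) from h1.symm]
    exact mem_cArc_base (by rw [h1]; exact hcell i)
  -- every element of A sits in some block
  have hAblocks : ∀ x ∈ A, ∃ i : Fin k,
      E i ≤ pos a₀ x ∧ pos a₀ x < E i + LB δ A (aa i) := by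
    intro x hx
    obtain ⟨m, hm, s, hs, rfl⟩ := A_cover hδ1 hδA hx
    obtain ⟨i, rfl⟩ := hsurjM m hm
    have hp : pos a₀ (aa i + (s : Fin n)) = E i + s := by
      have : aa i + (s : Fin n) = a₀ + (((E i + s : ℕ)) : Fin n) := by
        show a₀ + ((E i : ℕ) : Fin n) + _ = _
        rw [add_assoc, ← Nat.cast_add]
      rw [this]
      exact pos_add a₀ (by have := hLn i; omega)
    rw [hp]
    exact ⟨i, by omega, by omega⟩
  -- locating cells
  have hfind : ∀ p, p < n → ∃ i : Fin k, E i ≤ p ∧ p < E i + d i := by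
    intro p hp
    have hT : (Finset.univ.filter (fun i : Fin k => E i ≤ p)).Nonempty :=
      ⟨⟨0, kpos⟩, Finset.mem_filter.2 ⟨Finset.mem_univ _, by rw [hE0]; omega⟩⟩
    obtain ⟨i, hiT, himax⟩ := Finset.exists_max_image _ (fun i : Fin k => i.val) hT
    have hiE : E i ≤ p := (Finset.mem_filter.1 hiT).2
    refine ⟨i, hiE, ?_⟩
    by_cases h : i.val + 1 < k
    · rw [hd1 i h]
      by_contra hc
      push_neg at hc
      have hmem : (⟨i.val + 1, h⟩ : Fin k) ∈ Finset.univ.filter (fun i : Fin k => E i ≤ p) :=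
        Finset.mem_filter.2 ⟨Finset.mem_univ _, hc⟩
      have := himax _ hmem
      simp at this
    · rw [hd2 i (by have := i.isLt; omega)]
      exact hp
  -- cells are disjoint
  have hcelldisj : ∀ (i j : Fin k) (p : ℕ), E i ≤ p → p < E i + d i →
      E j ≤ p → p < E j + d j → i = j := by
    intro i j p h1 h2 h3 h4
    rcases Nat.lt_trichotomy i.val j.val with h | h | h
    · have := hord i j h; omega
    · exact Fin.ext h
    · have := hord j i h; omega
  -- build the structure
  refine ⟨⟨k, kpos, aa, fun i => LB δ A (aa i), fun i => d i - LB δ A (aa i),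
    fun i => LB_pos hδ1 hδA _, ?_, ?_, ?_, ?_, ?_, ?_, ?_, ?_, ?_, ?_⟩⟩
  · -- consec
    intro i
    have hsum : LB δ A (aa i) + (d i - LB δ A (aa i)) = d i := by have := hLd i; omega
    rw [hsum, hEd i]
  · -- start_mem
    exact fun i => MM_sub (haM i)
  · -- gap_inter
    intro i
    rw [Finset.disjoint_left]
    intro x hx hxA
    obtain ⟨hg1, hg2⟩ := (hgapmem i x).1 hx
    obtain ⟨j, hb1, hb2⟩ := hAblocks x hxA
    have hij : i = j := hcelldisj i j (pos a₀ x) (by have := hLd i; omega) hg2 hb1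
      (by have := hLd j; omega)
    subst hij
    omega
  · -- cover
    intro x
    obtain ⟨i, h1, h2⟩ := hfind (pos a₀ x) (pos_lt a₀ x)
    rcases lt_or_ge (pos a₀ x) (E i + LB δ A (aa i)) with h | h
    · exact Or.inl ⟨i, (hblockmem i x).2 ⟨h1, h⟩⟩
    · exact Or.inr ⟨i, (hgapmem i x).2 ⟨h, h2⟩⟩
  · -- block_disj
    intro i j hne
    rw [Finset.disjoint_left]
    intro x hxi hxj
    obtain ⟨h1, h2⟩ := (hblockmem i x).1 hxi
    obtain ⟨h3, h4⟩ := (hblockmem j x).1 hxj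
    exact hne (hcelldisj i j (pos a₀ x) h1 (by have := hLd i; omega) h3
      (by have := hLd j; omega))
  · -- gap_disj
    intro i j hne
    rw [Finset.disjoint_left]
    intro x hxi hxj
    obtain ⟨h1, h2⟩ := (hgapmem i x).1 hxi
    obtain ⟨h3, h4⟩ := (hgapmem j x).1 hxj
    exact hne (hcelldisj i j (pos a₀ x) (by have := hLd i; omega) h2
      (by have := hLd j; omega) h4)
  · -- block_gap_disj
    intro i j
    rw [Finset.disjoint_left]
    intro x hxi hxj
    obtain ⟨h1, h2⟩ := (hblockmem i x).1 hxi
    obtain ⟨h3, h4⟩ := (hgapmem j x).1 hxj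
    have hij : i = j := hcelldisj i j (pos a₀ x) h1 (by have := hLd i; omega)
      (by have := hLd j; omega) h4
    subst hij
    omega
  · -- density_lb
    intro i
    have hc : (cArc n (aa i) (LB δ A (aa i))).card = LB δ A (aa i) :=
      cArc_card (by have := hLn i; omega)
    rw [hc]
    have := LB_lt hδ1 hδA (A := A) (aa i)
    rw [cnt] at this
    linarith
  · -- density_ub
    intro i
    have hc : (cArc n (aa i) (LB δ A (aa i))).card = LB δ A (aa i) :=
      cArc_card (by have := hLn i; omega)
    rw [hc]
    have := LB_lb hδ1 hδA (MM_sub (haM i))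
    rw [cnt] at this
    exact this
  · -- initial_seg
    intro i t ht
    have ht' : t + 1 < LB δ A (aa i) := ht
    clear ht
    have hLni := hLn i
    have hc : (cArc n (aa i) (t + 1)).card = t + 1 := cArc_card (by omega)
    rw [hc, Finset.inter_comm]
    have := LB_ge hδ1 hδA (aa i) (t := t + 1) (by omega) ht'
    rw [cnt] at this
    push_cast at this ⊢
    linarith

end

end BSAux
/-- For a positive integer `n`, a nonempty `A ⊆ [n]`, and a real density
`δ` with `1 ≤ δ ≤ (n−1)/|A|`, the block structure of `A` on `[n]` with respect to `δ`
exists and is unique (unique as a partition: any two block structures have the same set of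
blocks and the same set of gaps). -/
theorem block_structure_exists_and_unique (n : ℕ) [NeZero n] (A : Finset (Fin n))
    (hA : A.Nonempty) (δ : ℝ) (hδ1 : 1 ≤ δ) (hδ2 : δ ≤ ((n : ℝ) - 1) / A.card) :
    Nonempty (BlockStructure n δ A) ∧
      ∀ P Q : BlockStructure n δ A,
        Set.range P.block = Set.range Q.block ∧ Set.range P.gap = Set.range Q.gap := by
  have hA0 : (0 : ℝ) < (A.card : ℝ) := by exact_mod_cast hA.card_pos
  have hδA : δ * A.card ≤ (n : ℝ) - 1 := by
    rwa [le_div_iff₀ hA0] at hδ2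
  refine ⟨BSAux.exists_bs hA hδ1 hδA, ?_⟩
  intro P Q
  constructor
  · rw [BSAux.range_block_eq hδ1 hδA P, BSAux.range_block_eq hδ1 hδA Q]
  · rw [BSAux.range_gap_eq hA hδ1 hδA P, BSAux.range_gap_eq hA hδ1 hδA Q]
end

section
/- Let d ≥ 1 be an integer and let n = 2d+1. Then there exists a partition of the family of all subsets of [n] of cardinality at least d into intervals [A,B] such that |B| ≥ d+1 for every interval in the partition. (In particular, there is an injection from the d-subsets of [n] to the (d+1)-subsets of [n] sending each d-set A to a (d+1)-set containing A.) -/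
open Finset

lemma exists_matching (d n : ℕ) (hn : n = 2 * d + 1) :
    ∃ φ : Finset (Fin n) → Finset (Fin n),
        Set.InjOn φ {A : Finset (Fin n) | A.card = d} ∧
        ∀ A : Finset (Fin n), A.card = d → A ⊆ φ A ∧ (φ A).card = d + 1 := by
  classical
  set ι := {A : Finset (Fin n) // A.card = d}
  set t : ι → Finset (Finset (Fin n)) :=
    fun A => (Finset.univ \ A.val).image (fun x => insert x A.val) with ht
  have hcard_t : ∀ A : ι, (t A).card = d + 1 := by
    intro A
    rw [Finset.card_image_of_injOn]
    · have : (Finset.univ \ A.val).card = n - d := by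
        rw [Finset.card_sdiff_of_subset (Finset.subset_univ _), Finset.card_univ, Fintype.card_fin, A.2]
      rw [this, hn]; omega
    · intro x hx y hy hxy
      simp only [Finset.coe_sdiff, Finset.coe_univ, Set.mem_diff, Set.mem_univ, true_and, Finset.mem_coe] at hx hy
      simp only at hxy
      have : x ∈ insert y A.val := hxy ▸ Finset.mem_insert_self x A.val
      rcases Finset.mem_insert.1 this with h | h
      · exact h
      · exact absurd h hx
  have hmem_t : ∀ (A : ι) (B : Finset (Fin n)), B ∈ t A → A.val ⊆ B ∧ B.card = d + 1 := by
    intro A B hB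
    rw [ht] at hB
    simp only [Finset.mem_image, Finset.mem_sdiff, Finset.mem_univ, true_and] at hB
    obtain ⟨x, hx, rfl⟩ := hB
    exact ⟨Finset.subset_insert _ _, by rw [Finset.card_insert_of_notMem hx, A.2]⟩
  have hall : ∀ s : Finset ι, s.card ≤ (s.biUnion t).card := by
    intro s
    set N := s.biUnion t with hN
    have key : (d + 1) * s.card ≤ (d + 1) * N.card := by
      calc (d + 1) * s.card = ∑ A ∈ s, (t A).card := by
              rw [Finset.sum_congr rfl (fun A _ => hcard_t A), Finset.sum_const, smul_eq_mul,
                mul_comm]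
        _ ≤ ∑ A ∈ s, (N.filter (fun B => A.val ⊆ B)).card := by
              apply Finset.sum_le_sum
              intro A hA
              apply Finset.card_le_card
              intro B hB
              rw [Finset.mem_filter]
              exact ⟨Finset.mem_biUnion.2 ⟨A, hA, hB⟩, (hmem_t A B hB).1⟩
        _ = ∑ A ∈ s, ∑ B ∈ N, if A.val ⊆ B then 1 else 0 := by
              apply Finset.sum_congr rfl; intro A _
              rw [Finset.card_filter]
        _ = ∑ B ∈ N, ∑ A ∈ s, if A.val ⊆ B then 1 else 0 := Finset.sum_comm
        _ = ∑ B ∈ N, (s.filter (fun A => A.val ⊆ B)).card := by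
              apply Finset.sum_congr rfl; intro B _
              rw [Finset.card_filter]
        _ ≤ ∑ B ∈ N, (d + 1) := by
              apply Finset.sum_le_sum
              intro B hB
              obtain ⟨A₀, hA₀s, hA₀⟩ := Finset.mem_biUnion.1 hB
              have hBcard : B.card = d + 1 := (hmem_t A₀ B hA₀).2
              have : (s.filter (fun A => A.val ⊆ B)).card ≤ (B.powersetCard d).card := by
                apply Finset.card_le_card_of_injOn (fun A => A.val)
                · intro A hA
                  rw [Finset.mem_coe, Finset.mem_filter] at hA
                  exact Finset.mem_powersetCard.2 ⟨hA.2, A.2⟩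
                · intro A _ A' _ h
                  exact Subtype.ext h
              calc (s.filter (fun A => A.val ⊆ B)).card ≤ (B.powersetCard d).card := this
                _ = (d + 1).choose d := by rw [Finset.card_powersetCard, hBcard]
                _ = d + 1 := Nat.choose_succ_self_right d
        _ = (d + 1) * N.card := by rw [Finset.sum_const, smul_eq_mul, mul_comm]
    exact Nat.le_of_mul_le_mul_left key (Nat.succ_pos d)
  obtain ⟨f, hf_inj, hf_mem⟩ := (Finset.all_card_le_biUnion_card_iff_exists_injective t).1 hall
  refine ⟨fun A => if h : A.card = d then f ⟨A, h⟩ else A, ?_, ?_⟩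
  · intro A hA B hB hAB
    simp only [Set.mem_setOf_eq] at hA hB
    simp only [dif_pos hA, dif_pos hB] at hAB
    exact congrArg Subtype.val (hf_inj hAB)
  · intro A hA
    simp only [dif_pos hA]
    exact hmem_t ⟨A, hA⟩ _ (hf_mem ⟨A, hA⟩)

/-- Let `d ≥ 1` and `n = 2d+1`. Then the family of all subsets of `[n]` of
cardinality at least `d` can be partitioned into intervals `[A,B] = {C : A ⊆ C ⊆ B}` with
`|B| ≥ d+1` for every interval; in particular there is an injection from the `d`-subsets of
`[n]` to the `(d+1)`-subsets sending each `d`-set to a `(d+1)`-set containing it. -/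
theorem partition_c_eq_two (d : ℕ) (hd : 0 < d) (n : ℕ) (hn : n = 2 * d + 1) :
    (∃ P : Set (Finset (Fin n) × Finset (Fin n)),
        (∀ p ∈ P, p.1 ⊆ p.2 ∧ d ≤ p.1.card ∧ d + 1 ≤ p.2.card) ∧
        (∀ C : Finset (Fin n), d ≤ C.card → ∃! p, p ∈ P ∧ p.1 ⊆ C ∧ C ⊆ p.2)) ∧
    (∃ φ : Finset (Fin n) → Finset (Fin n),
        Set.InjOn φ {A : Finset (Fin n) | A.card = d} ∧
        ∀ A : Finset (Fin n), A.card = d → A ⊆ φ A ∧ (φ A).card = d + 1) := by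
  obtain ⟨φ, hφ_inj, hφ⟩ := exists_matching d n hn
  refine ⟨⟨{p | p.1.card = d ∧ p.2 = φ p.1} ∪
      {p | p.1 = p.2 ∧ d + 1 ≤ p.2.card ∧ ∀ A : Finset (Fin n), A.card = d → φ A ≠ p.2},
      ?_, ?_⟩, φ, hφ_inj, hφ⟩
  · rintro p (⟨h1, h2⟩ | ⟨h1, h2, _⟩)
    · exact ⟨h2 ▸ (hφ p.1 h1).1, h1.ge, by rw [h2, (hφ p.1 h1).2]⟩
    · exact ⟨h1 ▸ Finset.Subset.refl p.1, by rw [h1]; omega, h2⟩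
  · intro C hC
    rcases eq_or_lt_of_le hC with hCd | hCd
    · -- C has cardinality exactly d
      refine ⟨(C, φ C), ⟨Or.inl ⟨hCd.symm, rfl⟩, subset_rfl, (hφ C hCd.symm).1⟩, ?_⟩
      rintro q ⟨(⟨h1, h2⟩ | ⟨h1, h2, _⟩), hq1, hq2⟩
      · have : q.1 = C := Finset.eq_of_subset_of_card_le hq1 (by omega)
        exact Prod.ext this (by rw [h2, this])
      · exfalso
        have h4 : q.2 ⊆ C := h1 ▸ hq1
        have := Finset.card_le_card h4
        omega
    · -- C has cardinality ≥ d + 1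
      by_cases him : ∃ A : Finset (Fin n), A.card = d ∧ φ A = C
      · obtain ⟨A, hA, hAC⟩ := him
        have hCcard : C.card = d + 1 := hAC ▸ (hφ A hA).2
        refine ⟨(A, C), ⟨Or.inl ⟨hA, hAC.symm⟩, hAC ▸ (hφ A hA).1, subset_rfl⟩, ?_⟩
        rintro q ⟨(⟨h1, h2⟩ | ⟨h1, h2, h3⟩), hq1, hq2⟩
        · have hq2' : C = φ q.1 := Finset.eq_of_subset_of_card_le (h2 ▸ hq2)
            (by rw [hCcard, (hφ q.1 h1).2])
          have : q.1 = A := hφ_inj h1 hA (by rw [← hq2', hAC])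
          exact Prod.ext this (show q.2 = C by rw [h2]; exact hq2'.symm)
        · exfalso
          have : C = q.2 := Finset.eq_of_subset_of_card_le hq2
            (Finset.card_le_card (h1 ▸ hq1))
          exact h3 A hA (hAC.trans this)
      · push_neg at him
        refine ⟨(C, C), ⟨Or.inr ⟨rfl, show d + 1 ≤ C.card by omega, fun A hA => him A hA⟩,
          subset_rfl, subset_rfl⟩, ?_⟩
        rintro q ⟨(⟨h1, h2⟩ | ⟨h1, h2, h3⟩), hq1, hq2⟩
        · exfalso
          have : C = φ q.1 := Finset.eq_of_subset_of_card_le (h2 ▸ hq2)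
            (by rw [(hφ q.1 h1).2]; omega)
          exact him q.1 h1 this.symm
        · have h4 : q.2 ⊆ C := h1 ▸ hq1
          have : q.2 = C := Finset.Subset.antisymm h4 hq2
          exact Prod.ext (h1.trans this) this
end

section
/- Let c and d be positive integers and let n = cd + c − 1. If A ⊆ [n] is a d-set, then the interval [A, f_c(A)] contains exactly c − 1 subsets of [n] of cardinality d+1. -/
open Fin.NatCast

/-- Let `c, d` be positive integers and `n = cd + c − 1`. If `A ⊆ [n]` is a
`d`-set, then the interval `[A, f_c(A)]` contains exactly `c − 1` subsets of `[n]` of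
cardinality `d + 1`. -/
theorem interval_card_d_add_one (c d n : ℕ) (hc : 0 < c) (hd : 0 < d)
    (hn : n = c * d + c - 1) [NeZero n]
    (A : Finset (Fin n)) (hA : A.card = d) (P : BlockStructure n (c : ℝ) A) :
    ((fInterval A P.fset).filter (fun C => C.card = d + 1)).card = c - 1 := by
  classical
  -- gapsUnion is disjoint from A
  have hGA : Disjoint P.gapsUnion A := by
    rw [BlockStructure.gapsUnion, Finset.disjoint_biUnion_left]
    intro i _
    exact P.gap_inter i
  -- step 1: the filtered interval is in bijection with fset \ A = gapsUnion
  have hsd : P.fset \ A = P.gapsUnion := by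
    rw [BlockStructure.fset, Finset.union_sdiff_left, Finset.sdiff_eq_self_of_disjoint hGA]
  have hcount : ((fInterval A P.fset).filter (fun C => C.card = d + 1)).card
      = P.gapsUnion.card := by
    rw [← hsd]
    symm
    apply Finset.card_bij (fun x _ => insert x A)
    · intro x hx
      rw [Finset.mem_sdiff] at hx
      simp only [Finset.mem_filter, fInterval, Finset.mem_powerset]
      refine ⟨⟨Finset.insert_subset hx.1 Finset.subset_union_left, Finset.subset_insert x A⟩, ?_⟩
      rw [Finset.card_insert_of_notMem hx.2, hA]
    · intro x hx y hy h
      rw [Finset.mem_sdiff] at hx hy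
      have : x ∈ insert y A := h ▸ Finset.mem_insert_self x A
      rcases Finset.mem_insert.mp this with h' | h'
      · exact h'
      · exact absurd h' hx.2
    · intro C hC
      simp only [Finset.mem_filter, fInterval, Finset.mem_powerset] at hC
      obtain ⟨⟨hCsub, hAC⟩, hcard⟩ := hC
      have h1 : (C \ A).card = 1 := by
        rw [Finset.card_sdiff_of_subset hAC, hcard, hA]; omega
      obtain ⟨x, hx⟩ := Finset.card_eq_one.mp h1
      have hxC : x ∈ C \ A := hx ▸ Finset.mem_singleton_self x
      rw [Finset.mem_sdiff] at hxC
      refine ⟨x, Finset.mem_sdiff.mpr ⟨hCsub hxC.1, hxC.2⟩, ?_⟩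
      have : C \ A ∪ A = C := Finset.sdiff_union_of_subset hAC
      rw [hx] at this
      rw [← this, Finset.insert_eq]
  rw [hcount]
  -- step 2: count the gaps union
  set BU : Finset (Fin n) := Finset.univ.biUnion P.block with hBU
  have hdisjBG : Disjoint BU P.gapsUnion := by
    rw [Finset.disjoint_biUnion_left]
    intro i _
    rw [BlockStructure.gapsUnion, Finset.disjoint_biUnion_right]
    intro j _
    exact P.block_gap_disj i j
  have hunion : BU ∪ P.gapsUnion = Finset.univ := by
    apply Finset.eq_univ_of_forall
    intro x
    rcases P.cover x with ⟨i, hi⟩ | ⟨i, hi⟩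
    · exact Finset.mem_union_left _ (Finset.mem_biUnion.mpr ⟨i, Finset.mem_univ i, hi⟩)
    · exact Finset.mem_union_right _ (Finset.mem_biUnion.mpr ⟨i, Finset.mem_univ i, hi⟩)
  have htotal : BU.card + P.gapsUnion.card = n := by
    rw [← Finset.card_union_of_disjoint hdisjBG, hunion, Finset.card_univ, Fintype.card_fin]
  -- each block has size c * |A ∩ Bᵢ|
  have hblock : ∀ i, (P.block i).card = c * (A ∩ P.block i).card := by
    intro i
    have h1 := P.density_lb i
    have h2 := P.density_ub i
    have h1' : c * (A ∩ P.block i).card < (P.block i).card + 1 := by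
      rw [BlockStructure.block]
      exact_mod_cast (by linarith : ((c:ℝ) * ((A ∩ cArc n (P.bstart i) (P.blen i)).card : ℝ) : ℝ)
        < ((cArc n (P.bstart i) (P.blen i)).card : ℝ) + 1)
    have h2' : (P.block i).card ≤ c * (A ∩ P.block i).card := by
      rw [BlockStructure.block]
      exact_mod_cast h2
    omega
  -- A is contained in the union of blocks
  have hAB : A ⊆ BU := by
    intro x hx
    rcases P.cover x with ⟨i, hi⟩ | ⟨i, hi⟩
    · exact Finset.mem_biUnion.mpr ⟨i, Finset.mem_univ i, hi⟩
    · exact absurd hx (Finset.disjoint_left.mp (P.gap_inter i) hi)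
  have hBUcard : BU.card = c * d := by
    rw [hBU, Finset.card_biUnion (fun i _ j _ h => show Disjoint (P.block i) (P.block j) from P.block_disj i j h)]
    have : ∑ i, (P.block i).card = ∑ i, c * (A ∩ P.block i).card := by
      exact Finset.sum_congr rfl (fun i _ => hblock i)
    rw [this, ← Finset.mul_sum]
    congr 1
    have hA' : Finset.univ.biUnion (fun i => A ∩ P.block i) = A := by
      rw [← Finset.inter_biUnion, ← hBU]
      exact Finset.inter_eq_left.mpr hAB
    rw [← hA]
    conv_rhs => rw [← hA']
    exact (Finset.card_biUnion (fun i _ j _ h =>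
      Finset.disjoint_of_subset_left Finset.inter_subset_right
        (Finset.disjoint_of_subset_right Finset.inter_subset_right (P.block_disj i j h)))).symm
  omega
end

section
/- Let c and d be positive integers and let n = cd + c − 1. Then every (d+1)-subset of [n] is contained in exactly one of the intervals [A, f_c(A)], as A ranges over all d-subsets of [n]. -/
open Fin.NatCast

open Finset

section Aux
variable {n : ℕ} [NeZero n]

lemma natCast_injOn_Fin {a b : ℕ} (hab : (a : Fin n) = (b : Fin n)) (h : a ≤ b) (h2 : b < a + n) :
    a = b := by
  have := Fin.val_eq_val (a : Fin n) (b : Fin n)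
  rw [Fin.val_natCast, Fin.val_natCast] at this
  have hmod : a % n = b % n := this.mpr hab
  have hd : n ∣ b - a := (Nat.modEq_iff_dvd' h).mp hmod
  have := Nat.eq_zero_of_dvd_of_lt hd
  omega

lemma cArc_card_of_le {s : Fin n} {l : ℕ} (h : l ≤ n) : (cArc n s l).card = l := by
  rw [cArc, Finset.card_image_of_injOn, card_range]
  intro a ha b hb hab
  simp only [coe_range, Set.mem_Iio] at ha hb
  have h' : (a : Fin n) = (b : Fin n) := add_left_cancel hab
  rcases le_total a b with hle | hle
  · exact natCast_injOn_Fin h' hle (by omega)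
  · exact (natCast_injOn_Fin h'.symm hle (by omega)).symm

lemma cArc_mono (s : Fin n) {l l' : ℕ} (h : l ≤ l') : cArc n s l ⊆ cArc n s l' :=
  image_subset_image (by simpa using h)

lemma cArc_univ (s : Fin n) : cArc n s n = univ := by
  apply Finset.eq_univ_of_card
  rw [cArc_card_of_le le_rfl, Fintype.card_fin]

end Aux

section Weights
variable {n : ℕ} [NeZero n]

/-- weight of position `j` (viewed on the circle) w.r.t. the set `D`. -/
def wtF (c : ℕ) (D : Finset (Fin n)) (j : ℕ) : ℤ :=
  if ((j : Fin n) ∈ D) then (c : ℤ) - 1 else -1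

/-- prefix sums of the weights. -/
def pS (c : ℕ) (D : Finset (Fin n)) (t : ℕ) : ℤ :=
  ∑ j ∈ Finset.range t, wtF c D j

lemma cArc_natCast_eq_image (m l : ℕ) :
    cArc n ((m : ℕ) : Fin n) l = (Finset.Ico m (m + l)).image (fun j : ℕ => (j : Fin n)) := by
  ext x
  simp only [cArc, mem_image, mem_range, mem_Ico]
  constructor
  · rintro ⟨t, ht, rfl⟩
    exact ⟨m + t, ⟨by omega, by omega⟩, by push_cast; ring⟩
  · rintro ⟨j, hj, rfl⟩
    refine ⟨j - m, by omega, ?_⟩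
    have h0 : m + (j - m) = j := by omega
    have : ((j - m : ℕ) : Fin n) = (j : Fin n) - (m : Fin n) := by
      calc ((j - m : ℕ) : Fin n) = ((m + (j-m) : ℕ) : Fin n) - (m : Fin n) := by
            push_cast; abel
        _ = (j : Fin n) - (m : Fin n) := by rw [h0]
    rw [this]; abel

lemma sum_wt_Ico (c : ℕ) (D : Finset (Fin n)) {m l : ℕ} (h : l ≤ n) :
    ∑ j ∈ Finset.Ico m (m + l), wtF c D j
      = (c : ℤ) * ((cArc n ((m : ℕ) : Fin n) l ∩ D).card : ℤ) - l := by
  have hinj : Set.InjOn (fun j : ℕ => (j : Fin n)) (Finset.Ico m (m + l)) := by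
    intro a ha b hb hab
    simp only [coe_Ico, Set.mem_Ico] at ha hb
    rcases le_total a b with hle | hle
    · exact natCast_injOn_Fin hab hle (by omega)
    · exact (natCast_injOn_Fin hab.symm hle (by omega)).symm
  have himg := cArc_natCast_eq_image (n := n) m l
  have hsum : ∑ j ∈ Finset.Ico m (m + l), wtF c D j
      = ∑ y ∈ cArc n ((m : ℕ) : Fin n) l, (if y ∈ D then (c : ℤ) - 1 else -1) := by
    rw [himg, Finset.sum_image (fun a ha b hb hh => hinj ha hb hh)]
    rfl
  rw [hsum]
  have h2 : ∀ y ∈ cArc n ((m : ℕ) : Fin n) l,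
      (if y ∈ D then (c : ℤ) - 1 else -1) = (if y ∈ D then (c : ℤ) else 0) - 1 := by
    intro y _; split_ifs <;> ring
  rw [Finset.sum_congr rfl h2, Finset.sum_sub_distrib, Finset.sum_ite_mem,
    Finset.sum_const, Finset.sum_const, cArc_card_of_le h, inter_comm]
  ring

lemma pS_add (c : ℕ) (D : Finset (Fin n)) (t : ℕ) :
    pS c D (t + n) = pS c D t + ((c : ℤ) * D.card - n) := by
  have h1 : pS c D (t + n) - pS c D t = ∑ j ∈ Finset.Ico t (t + n), wtF c D j := by
    rw [pS, pS, Finset.sum_Ico_eq_sub _ (by omega)]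
  have h2 := sum_wt_Ico (n := n) c D (m := t) (l := n) le_rfl
  rw [cArc_univ, univ_inter] at h2
  omega

end Weights

section Blocks
variable {n : ℕ} [NeZero n] {c : ℕ} {A : Finset (Fin n)}

lemma BlockStructure.block_card' (P : BlockStructure n (c : ℝ) A) (i : Fin P.k) :
    (P.block i).card = c * (A ∩ P.block i).card := by
  have h1 := P.density_ub i
  have h2 := P.density_lb i
  have h1' : (P.block i).card ≤ c * (A ∩ P.block i).card := by exact_mod_cast h1
  have h2' : c * (A ∩ P.block i).card < (P.block i).card + 1 := by
    have : ((c * (A ∩ P.block i).card : ℕ) : ℝ) < ((P.block i).card : ℝ) + 1 := by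
      push_cast; unfold BlockStructure.block; linarith
    exact_mod_cast this
  omega

lemma BlockStructure.gapsUnion_card {d : ℕ} (hc : 0 < c) (hd : A.card = d)
    (hn : n = c * d + c - 1) (P : BlockStructure n (c : ℝ) A) :
    P.gapsUnion.card = c - 1 := by
  classical
  have hb : (univ.biUnion P.block).card = ∑ i, (P.block i).card :=
    card_biUnion (fun x _ y _ hxy => P.block_disj x y hxy)
  have hg : P.gapsUnion.card = ∑ i, (P.gap i).card :=
    card_biUnion (fun x _ y _ hxy => P.gap_disj x y hxy)
  have hsplit : (univ : Finset (Fin n)) = univ.biUnion P.block ∪ univ.biUnion P.gap := by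
    symm
    apply eq_univ_of_forall
    intro x
    rcases P.cover x with ⟨i, hi⟩ | ⟨i, hi⟩
    · exact mem_union_left _ (mem_biUnion.mpr ⟨i, mem_univ _, hi⟩)
    · exact mem_union_right _ (mem_biUnion.mpr ⟨i, mem_univ _, hi⟩)
  have hdisj : Disjoint (univ.biUnion P.block) (univ.biUnion P.gap) := by
    rw [Finset.disjoint_biUnion_left]
    intro i _
    rw [Finset.disjoint_biUnion_right]
    intro j _
    exact P.block_gap_disj i j
  have hcard : n = ∑ i, (P.block i).card + P.gapsUnion.card := by
    have h := card_union_of_disjoint hdisj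
    rw [← hsplit, card_univ, Fintype.card_fin, hb] at h
    exact h
  have hA : A = univ.biUnion (fun i => A ∩ P.block i) := by
    ext x
    simp only [mem_biUnion, mem_univ, true_and, mem_inter]
    constructor
    · intro hx
      rcases P.cover x with ⟨i, hi⟩ | ⟨i, hi⟩
      · exact ⟨i, hx, hi⟩
      · exact absurd hx (disjoint_left.mp (P.gap_inter i) hi)
    · rintro ⟨i, hx, _⟩
      exact hx
  have hAc : A.card = ∑ i, (A ∩ P.block i).card := by
    conv_lhs => rw [hA]
    exact card_biUnion (fun x _ y _ hxy =>
      (P.block_disj x y hxy).mono inter_subset_right inter_subset_right)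
  have hbc : ∑ i, (P.block i).card = c * d := by
    rw [Finset.sum_congr rfl (fun i _ => P.block_card' i), ← Finset.mul_sum, ← hAc, hd]
  omega

lemma BlockStructure.blen_le {d : ℕ} (hc2 : 2 ≤ c) (hd : A.card = d)
    (hn : n = c * d + c - 1) (P : BlockStructure n (c : ℝ) A) (i : Fin P.k) :
    P.blen i ≤ n := by
  by_contra hbl
  push_neg at hbl
  have hsub : cArc n (P.bstart i) n ⊆ cArc n (P.bstart i) (P.blen i) := cArc_mono _ (by omega)
  rw [cArc_univ] at hsub
  have he : P.block i = univ := univ_subset_iff.mp hsub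
  have hbc := P.block_card' i
  rw [he, card_univ, Fintype.card_fin] at hbc
  have hle : (A ∩ univ).card ≤ A.card := card_le_card inter_subset_left
  have hdle : c * (A ∩ univ).card ≤ c * d := by
    rw [hd] at hle; exact Nat.mul_le_mul_left c hle
  omega

end Blocks

section Count
variable {n : ℕ} [NeZero n] {c d : ℕ}

lemma card_filter_interval {A : Finset (Fin n)} (hc : 0 < c) (hd : A.card = d)
    (hn : n = c * d + c - 1) (P : BlockStructure n (c : ℝ) A) :
    (((univ : Finset (Fin n)).powersetCard (d + 1)).filter
      (fun E => E ∈ fInterval A P.fset)).card = c - 1 := by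
  classical
  have hdisjA : Disjoint P.gapsUnion A := by
    rw [BlockStructure.gapsUnion, Finset.disjoint_biUnion_left]
    intro i _
    exact P.gap_inter i
  have himg : ((univ : Finset (Fin n)).powersetCard (d + 1)).filter
      (fun E => E ∈ fInterval A P.fset) = P.gapsUnion.image (fun y => insert y A) := by
    ext E
    simp only [mem_filter, mem_powersetCard_univ, fInterval, mem_powerset, mem_image]
    constructor
    · rintro ⟨hcard, hsub, hAE⟩
      have hsd : (E \ A).card = 1 := by
        rw [card_sdiff_of_subset hAE, hcard, hd]
        omega
      obtain ⟨y, hy⟩ := Finset.card_eq_one.mp hsd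
      have hyE : y ∈ E \ A := hy ▸ mem_singleton_self y
      refine ⟨y, ?_, ?_⟩
      · have := hsub (mem_sdiff.mp hyE).1
        rcases mem_union.mp this with h | h
        · exact absurd h (mem_sdiff.mp hyE).2
        · exact h
      · -- insert y A = E
        apply Finset.eq_of_subset_of_card_le
        · exact insert_subset (mem_sdiff.mp hyE).1 hAE
        · rw [hcard, card_insert_of_notMem (mem_sdiff.mp hyE).2, hd]
    · rintro ⟨y, hy, rfl⟩
      have hyA : y ∉ A := disjoint_left.mp hdisjA hy
      refine ⟨by rw [card_insert_of_notMem hyA, hd], ?_, subset_insert _ _⟩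
      exact insert_subset (mem_union_right _ hy) subset_union_left
  rw [himg, Finset.card_image_of_injOn, P.gapsUnion_card hc hd hn]
  intro y hy y' hy' hyy'
  have hyA : y ∉ A := disjoint_left.mp hdisjA (by exact_mod_cast hy)
  have heq : insert y A = insert y' A := hyy'
  have : y ∈ insert y' A := heq ▸ mem_insert_self y A
  rcases mem_insert.mp this with h | h
  · exact h
  · exact absurd h hyA

end Count

lemma exists_cover {n : ℕ} [NeZero n] (c d : ℕ) (hc2 : 2 ≤ c) (hn : n = c * d + c - 1)
    (F : Finset (Fin n) → Finset (Fin n))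
    (hF : ∀ A : Finset (Fin n), A.card = d → ∃ P : BlockStructure n (c : ℝ) A, F A = P.fset)
    (D : Finset (Fin n)) (hD : D.card = d + 1) :
    ∃ A : Finset (Fin n), A.card = d ∧ D ∈ fInterval A (F A) := by
  classical
  have npos : 0 < n := Nat.pos_of_ne_zero (NeZero.ne n)
  set S : ℕ → ℤ := pS c D with hS
  have hstep : ∀ t, S (t + n) = S t + 1 := by
    intro t
    rw [hS, pS_add, hD]
    have h1 : n + 1 = c * d + c := by omega
    have h1' : (n : ℤ) + 1 = (c : ℤ) * d + c := by exact_mod_cast congrArg (Nat.cast : ℕ → ℤ) h1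
    push_cast
    linarith
  -- choose the largest minimizer p of S on [n, 2n)
  set T : Finset ℕ := Finset.Ico n (2 * n) with hT
  have hTne : T.Nonempty := ⟨n, by rw [hT, mem_Ico]; omega⟩
  obtain ⟨p0, hp0T, hp0min⟩ := T.exists_min_image S hTne
  set M : Finset ℕ := T.filter (fun m => ∀ m' ∈ T, S m ≤ S m') with hM
  have hMne : M.Nonempty := ⟨p0, mem_filter.mpr ⟨hp0T, hp0min⟩⟩
  set p : ℕ := M.max' hMne with hp
  have hpM : p ∈ M := M.max'_mem hMne
  have hpT : p ∈ T := (mem_filter.mp hpM).1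
  have hmin : ∀ m' ∈ T, S p ≤ S m' := (mem_filter.mp hpM).2
  have hpb : n ≤ p ∧ p < 2 * n := mem_Ico.mp hpT
  have hmaxs : ∀ m ∈ T, p < m → S p < S m := by
    intro m hm hpm
    by_contra hle
    push_neg at hle
    have hmM : m ∈ M := mem_filter.mpr ⟨hm, fun m' hm' => le_trans hle (hmin m' hm')⟩
    exact absurd (M.le_max' m hmM) (by omega)
  have hwp : S (p + 1) = S p + wtF c D p := by
    rw [hS, pS, pS, Finset.sum_range_succ]
  -- x := p is in D
  have hxD : ((p : ℕ) : Fin n) ∈ D := by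
    by_contra hxD
    have hw : wtF c D p = -1 := if_neg hxD
    rcases lt_or_eq_of_le (show p + 1 ≤ 2 * n by omega) with hlt | heq
    · have := hmin (p + 1) (mem_Ico.mpr ⟨by omega, hlt⟩)
      omega
    · have h2 : S (n + n) = S n + 1 := hstep n
      have h3 := hmin n (mem_Ico.mpr ⟨le_rfl, by omega⟩)
      have h4 : p + 1 = n + n := by omega
      rw [h4] at hwp
      omega
  set x : Fin n := ((p : ℕ) : Fin n) with hx
  set A : Finset (Fin n) := D.erase x with hA
  have hAcard : A.card = d := by
    rw [hA, card_erase_of_mem hxD, hD]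
    omega
  have hxA : x ∉ A := notMem_erase _ _
  obtain ⟨P, hP⟩ := hF A hAcard
  have hxg : x ∈ P.gapsUnion := by
    rcases P.cover x with ⟨i, hxb⟩ | ⟨i, hxg⟩
    · exfalso
      have hble : P.blen i ≤ n := P.blen_le hc2 hAcard hn i
      rw [cArc, mem_image] at hxb
      obtain ⟨q, hq, hxe⟩ := hxb
      rw [mem_range] at hq
      rcases Nat.eq_zero_or_pos q with rfl | hqpos
      · apply hxA
        have : P.bstart i = x := by simpa using hxe
        rw [← this]
        exact P.start_mem i
      have hq1n : q + 1 ≤ n := by omega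
      have hcard1 : (cArc n (P.bstart i) (q + 1)).card = q + 1 := cArc_card_of_le hq1n
      have hkey : (q + 1 : ℤ) ≤ (c : ℤ) * ((cArc n (P.bstart i) (q + 1) ∩ A).card : ℤ) := by
        rcases eq_or_lt_of_le (show q + 1 ≤ P.blen i by omega) with heq | hlt
        · have hbc := P.block_card' i
          rw [BlockStructure.block, ← heq, hcard1, inter_comm] at hbc
          exact_mod_cast hbc.le
        · have hseg := P.initial_seg i q hlt
          rw [hcard1] at hseg
          have : ((q : ℝ) + 1) + 1 ≤ (c : ℝ) * ((cArc n (P.bstart i) (q + 1) ∩ A).card : ℝ) := by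
            push_cast at hseg ⊢
            linarith
          have h' : (q + 1 + 1 : ℤ) ≤ (c : ℤ) * ((cArc n (P.bstart i) (q + 1) ∩ A).card : ℤ) := by
            exact_mod_cast this
          omega
      set m : ℕ := p - q with hm
      have hmq : m + q = p := by omega
      have hmcast : ((m : ℕ) : Fin n) = P.bstart i := by
        have h1 : ((m : ℕ) : Fin n) + ((q : ℕ) : Fin n) = ((p : ℕ) : Fin n) := by
          rw [← Nat.cast_add, hmq]
        have h2 : ((m : ℕ) : Fin n) + ((q : ℕ) : Fin n) = P.bstart i + ((q : ℕ) : Fin n) := by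
          rw [h1]; exact hxe.symm
        exact add_right_cancel h2
      have hsum := sum_wt_Ico (n := n) c D (m := m) (l := q + 1) hq1n
      rw [hmcast] at hsum
      set arc : Finset (Fin n) := cArc n (P.bstart i) (q + 1) with harc
      have hxarc : x ∈ arc := by
        rw [harc, cArc, mem_image]
        exact ⟨q, mem_range.mpr (by omega), hxe⟩
      have hiD : (arc ∩ A).card + 1 = (arc ∩ D).card := by
        have h1 : arc ∩ A = (arc ∩ D).erase x := by
          rw [hA, Finset.inter_erase]
        rw [h1, card_erase_of_mem (mem_inter.mpr ⟨hxarc, hxD⟩)]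
        have : 0 < (arc ∩ D).card := card_pos.mpr ⟨x, mem_inter.mpr ⟨hxarc, hxD⟩⟩
        omega
      have hIco : m + (q + 1) = p + 1 := by omega
      rw [hIco] at hsum
      have hS1 : ∑ j ∈ Finset.Ico m (p + 1), wtF c D j = S (p + 1) - S m := by
        rw [hS, pS, pS, Finset.sum_Ico_eq_sub _ (by omega)]
      have hw : wtF c D p = (c : ℤ) - 1 := if_pos hxD
      have hSm : S p ≤ S m := by
        rcases lt_or_ge m n with hmn | hmn
        · have h1 := hstep m
          have h2 := hmaxs (m + n) (mem_Ico.mpr ⟨by omega, by omega⟩) (by omega)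
          omega
        · exact hmin m (mem_Ico.mpr ⟨hmn, by omega⟩)
      have hub : S (p + 1) - S m ≤ (c : ℤ) - 1 := by omega
      have hmul : (c : ℤ) * ((arc ∩ D).card : ℤ) = (c : ℤ) * ((arc ∩ A).card : ℤ) + c := by
        have h' : ((arc ∩ D).card : ℤ) = ((arc ∩ A).card : ℤ) + 1 := by exact_mod_cast hiD.symm
        rw [h']; ring
      rw [hS1] at hsum
      have : (c : ℤ) ≤ (c : ℤ) - 1 := by
        push_cast at hsum
        linarith
      linarith
    · exact mem_biUnion.mpr ⟨i, mem_univ _, hxg⟩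
  refine ⟨A, hAcard, ?_⟩
  rw [fInterval, mem_filter, mem_powerset, hP]
  constructor
  · intro y hy
    by_cases hyx : y = x
    · subst hyx
      exact mem_union_right _ hxg
    · exact mem_union_left _ (mem_erase.mpr ⟨hyx, hy⟩)
  · exact erase_subset _ _

/-- (Lemma "d+1") Let `c, d` be positive integers and `n = cd + c − 1`. Then
every `(d+1)`-subset of `[n]` is contained in exactly one of the intervals `[A, f_c(A)]`,
as `A` ranges over the `d`-subsets of `[n]`. Here `F` assigns to each `d`-subset `A` the
set `f_c(A)` coming from a block structure of `A` with density `c`. -/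
theorem covered_by_unique_interval (c d n : ℕ) (hc : 0 < c) (hd : 0 < d)
    (hn : n = c * d + c - 1) [NeZero n]
    (F : Finset (Fin n) → Finset (Fin n))
    (hF : ∀ A : Finset (Fin n), A.card = d → ∃ P : BlockStructure n (c : ℝ) A, F A = P.fset)
    (D : Finset (Fin n)) (hD : D.card = d + 1) :
    ∃! A : Finset (Fin n), A.card = d ∧ D ∈ fInterval A (F A) := by
  classical
  have hDn : D.card ≤ n := by
    calc D.card ≤ (univ : Finset (Fin n)).card := card_le_univ D
      _ = n := by rw [card_univ, Fintype.card_fin]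
  have hc2 : 2 ≤ c := by
    by_contra h
    have hc1 : c = 1 := by omega
    subst hc1
    omega
  set 𝒜 : Finset (Finset (Fin n)) := (univ : Finset (Fin n)).powersetCard d with h𝒜
  set 𝒟 : Finset (Finset (Fin n)) := (univ : Finset (Fin n)).powersetCard (d + 1) with h𝒟
  have hcount : ∀ A ∈ 𝒜, (𝒟.filter (fun E => E ∈ fInterval A (F A))).card = c - 1 := by
    intro A hA
    have hAd : A.card = d := mem_powersetCard_univ.mp hA
    obtain ⟨P, hP⟩ := hF A hAd
    rw [hP]
    exact card_filter_interval hc hAd hn P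
  have hswap : ∑ A ∈ 𝒜, (𝒟.filter (fun E => E ∈ fInterval A (F A))).card
      = ∑ E ∈ 𝒟, (𝒜.filter (fun A => E ∈ fInterval A (F A))).card := by
    simp only [Finset.card_filter]
    exact Finset.sum_comm
  have hchoose : 𝒜.card * (c - 1) = 𝒟.card := by
    rw [h𝒜, h𝒟, card_powersetCard, card_powersetCard, card_univ, Fintype.card_fin]
    have h1 := Nat.choose_succ_right_eq n d
    have h3 : (c - 1) * (d + 1) + d = n := by
      have hc1 : c - 1 + 1 = c := by omega
      calc (c - 1) * (d + 1) + d = ((c - 1) + 1) * d + (c - 1) := by ring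
        _ = c * d + (c - 1) := by rw [hc1]
        _ = n := by omega
    have h2 : n - d = (c - 1) * (d + 1) := Nat.sub_eq_of_eq_add h3.symm
    rw [h2] at h1
    have h4 : n.choose (d + 1) * (d + 1) = (n.choose d * (c - 1)) * (d + 1) := by
      rw [h1]; ring
    exact (Nat.eq_of_mul_eq_mul_right (by omega) h4).symm
  have hsum1 : ∑ A ∈ 𝒜, (𝒟.filter (fun E => E ∈ fInterval A (F A))).card
      = 𝒜.card * (c - 1) := by
    rw [Finset.sum_congr rfl hcount, sum_const, smul_eq_mul]
  have hge : ∀ E ∈ 𝒟, 1 ≤ (𝒜.filter (fun A => E ∈ fInterval A (F A))).card := by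
    intro E hE
    obtain ⟨A, hAd, hint⟩ := exists_cover c d hc2 hn F hF E (mem_powersetCard_univ.mp hE)
    exact card_pos.mpr ⟨A, mem_filter.mpr ⟨mem_powersetCard_univ.mpr hAd, hint⟩⟩
  have htot : ∑ E ∈ 𝒟, (1 : ℕ) = ∑ E ∈ 𝒟, (𝒜.filter (fun A => E ∈ fInterval A (F A))).card := by
    rw [← hswap, hsum1, hchoose, sum_const, smul_eq_mul, mul_one]
  have huniq : ∀ E ∈ 𝒟, (𝒜.filter (fun A => E ∈ fInterval A (F A))).card = 1 := by
    intro E hE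
    exact ((Finset.sum_eq_sum_iff_of_le hge).mp htot E hE).symm
  have hDmem : D ∈ 𝒟 := mem_powersetCard_univ.mpr hD
  obtain ⟨A₀, hA₀⟩ := Finset.card_eq_one.mp (huniq D hDmem)
  have hA₀mem : A₀ ∈ 𝒜.filter (fun A => D ∈ fInterval A (F A)) := hA₀ ▸ mem_singleton_self _
  obtain ⟨hA₀𝒜, hA₀int⟩ := mem_filter.mp hA₀mem
  refine ⟨A₀, ⟨mem_powersetCard_univ.mp hA₀𝒜, hA₀int⟩, ?_⟩
  rintro A' ⟨hA'd, hint'⟩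
  have : A' ∈ 𝒜.filter (fun A => D ∈ fInterval A (F A)) :=
    mem_filter.mpr ⟨mem_powersetCard_univ.mpr hA'd, hint'⟩
  rw [hA₀] at this
  exact mem_singleton.mp this
end
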